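/- arXiv:1808.01772 — 2 statements merged into one kernel-verified Lean document; each statement's English description precedes it below -/
import Mathlib

section
/- Let (𝒜, H, D) be a smooth pre-spectral triple. Then for all x ∈ 𝒜 ∪ ∂(𝒜) and all k ≥ 0, the operator R^k_{|D*|}(x) maps dom_∞(|D*|) into dom_∞(D), and the operator R^k_{|D|}(x) maps dom_∞(|D|) into dom_∞(D). -/
set_option synthInstance.maxHeartbeats 400000
set_option maxHeartbeats 1000000

noncomputable section

namespace NCG

variable {H : Type*} [NormedAddCommGroup H] [InnerProductSpace ℂ H] [CompleteSpace H]

/-! ### Partially defined operators -/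

/-- Composition `S ∘ T` of partially defined linear operators: the domain is the set of
`x` in the domain of `T` such that `T x` lies in the domain of `S`. -/
def pcomp (S T : H →ₗ.[ℂ] H) : H →ₗ.[ℂ] H where
  domain := (S.domain.comap T.toFun).map T.domain.subtype
  toFun :=
    (S.toFun.comp (T.toFun.restrict (fun _ hx => hx))).comp
      ((Submodule.equivMapOfInjective T.domain.subtype (Submodule.injective_subtype _)
        (S.domain.comap T.toFun)).symm.toLinearMap)

/-- The identity as a partially defined operator (with full domain). -/
def idPMap : H →ₗ.[ℂ] H := ⟨⊤, LinearMap.id.comp (⊤ : Submodule ℂ H).subtype⟩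

/-- `n`-th power of a partially defined operator. -/
def ppow (T : H →ₗ.[ℂ] H) : ℕ → H →ₗ.[ℂ] H
  | 0 => idPMap
  | n + 1 => pcomp T (ppow T n)

/-- `dom_∞(T) = ⋂ₙ dom(Tⁿ)`. -/
def domInfty (T : H →ₗ.[ℂ] H) : Set H := ⋂ n : ℕ, ((ppow T n).domain : Set H)

/-- `1 + S` for a partially defined operator `S`. -/
def onePlus (S : H →ₗ.[ℂ] H) : H →ₗ.[ℂ] H := ⟨S.domain, S.toFun + S.domain.subtype⟩

/-- Composition of a bounded operator with a partially defined operator. -/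
def bcomp (U : H →L[ℂ] H) (L : H →ₗ.[ℂ] H) : H →ₗ.[ℂ] H :=
  ⟨L.domain, (U : H →ₗ[ℂ] H).comp L.toFun⟩

/-! ### Singular values, operator ideals and traces -/

/-- The `n`-th singular value (approximation number) of a bounded operator:
`μ(n,T) = inf{‖T − R‖ : rank R ≤ n}`. -/
def sval (T : H →L[ℂ] H) (n : ℕ) : ℝ :=
  sInf {c : ℝ | ∃ R : H →L[ℂ] H,
    Module.rank ℂ (LinearMap.range (R : H →ₗ[ℂ] H)) ≤ (n : Cardinal) ∧ ‖T - R‖ = c}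

/-- Membership in the weak Schatten ideal `𝓛_{p,∞}`: compact with `μ(n,T) = O((n+1)^{-1/p})`. -/
def MemLpW (p : ℝ) (T : H →L[ℂ] H) : Prop :=
  IsCompactOperator T ∧ ∃ C : ℝ, ∀ n : ℕ, sval T n ≤ C * ((n : ℝ) + 1) ^ (-(1 / p))

/-- Trace class `𝓛₁`. -/
def MemL1 (T : H →L[ℂ] H) : Prop :=
  IsCompactOperator T ∧ Summable (fun n => sval T n)

/-- The trace norm `‖T‖₁ = Σₙ μ(n,T)`. -/
def traceNorm (T : H →L[ℂ] H) : ℝ := ∑' n, sval T n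

/-- The Schatten class `𝓛_s`. -/
def MemSchatten (s : ℝ) (T : H →L[ℂ] H) : Prop :=
  IsCompactOperator T ∧ Summable (fun n => sval T n ^ s)

/-- The Lorentz ideal `𝓛_{q,1}`. -/
def MemLq1 (q : ℝ) (T : H →L[ℂ] H) : Prop :=
  Summable (fun n : ℕ => sval T n / ((n : ℝ) + 1) ^ (1 - 1 / q))

/-- A trace on `𝓛_{1,∞}`: a unitarily invariant linear functional. -/
structure TraceOnL1W (H : Type*) [NormedAddCommGroup H] [InnerProductSpace ℂ H]
    [CompleteSpace H] where
  toFun : (H →L[ℂ] H) → ℂ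
  map_add : ∀ S T : H →L[ℂ] H, MemLpW 1 S → MemLpW 1 T → toFun (S + T) = toFun S + toFun T
  map_smul : ∀ (c : ℂ) (T : H →L[ℂ] H), MemLpW 1 T → toFun (c • T) = c * toFun T
  unitary_invariant : ∀ U T : H →L[ℂ] H, MemLpW 1 T →
    star U * U = 1 → U * star U = 1 → toFun (U * T * star U) = toFun T

/-- A trace on `𝓛_{1,∞}` is normalised if it takes the value `1` on the operator which is
diagonal with eigenvalue sequence `{1/(n+1)}ₙ` in some orthonormal basis. -/
def TraceOnL1W.Normalised (τ : TraceOnL1W H) : Prop :=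
  ∀ (b : HilbertBasis ℕ ℂ H) (T : H →L[ℂ] H),
    (∀ ξ : H, T ξ = ∑' n : ℕ, (((n : ℂ) + 1)⁻¹ * (inner ℂ (b n) ξ : ℂ)) • b n) → τ.toFun T = 1

/-- The operator trace, computed in some fixed Hilbert basis. -/
def opTrace (T : H →L[ℂ] H) : ℂ :=
  ∑' i : (exists_hilbertBasis ℂ H).choose,
    (inner ℂ ((exists_hilbertBasis ℂ H).choose_spec.choose i)
      (T ((exists_hilbertBasis ℂ H).choose_spec.choose i)) : ℂ)

/-! ### Resolvents and related characterisations -/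

/-- `R` is the (everywhere defined, bounded) inverse of `1 + D*D`. -/
def IsResolventDstarD (D : H →ₗ.[ℂ] H) (R : H →L[ℂ] H) : Prop :=
  0 ≤ R ∧ ∀ ξ : H, ∃ (h1 : R ξ ∈ D.domain) (h2 : (D ⟨R ξ, h1⟩ : H) ∈ D.adjoint.domain),
    R ξ + D.adjoint ⟨D ⟨R ξ, h1⟩, h2⟩ = ξ

/-- `R` is the (everywhere defined, bounded) inverse of `1 + DD*`. -/
def IsResolventDDstar (D : H →ₗ.[ℂ] H) (R : H →L[ℂ] H) : Prop :=
  0 ≤ R ∧ ∀ ξ : H, ∃ (h1 : R ξ ∈ D.adjoint.domain) (h2 : (D.adjoint ⟨R ξ, h1⟩ : H) ∈ D.domain),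
    R ξ + D ⟨D.adjoint ⟨R ξ, h1⟩, h2⟩ = ξ

/-- `R` is an (everywhere defined, bounded) right inverse of `S + z`. -/
def IsResolventAt (S : H →ₗ.[ℂ] H) (z : ℂ) (R : H →L[ℂ] H) : Prop :=
  ∀ ξ : H, ∃ h : R ξ ∈ S.domain, S ⟨R ξ, h⟩ + z • R ξ = ξ

/-- `M = |D|`: the nonnegative self-adjoint operator with `M² = D*D`. -/
def IsAbsOf (D M : H →ₗ.[ℂ] H) : Prop :=
  IsSelfAdjoint M ∧ (∀ x : M.domain, 0 ≤ (inner ℂ (M x) (x : H) : ℂ).re) ∧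
    pcomp M M = pcomp D.adjoint D

/-- `M = |D*|`: the nonnegative self-adjoint operator with `M² = DD*`. -/
def IsAbsAdjOf (D M : H →ₗ.[ℂ] H) : Prop :=
  IsSelfAdjoint M ∧ (∀ x : M.domain, 0 ≤ (inner ℂ (M x) (x : H) : ℂ).re) ∧
    pcomp M M = pcomp D (LinearPMap.adjoint D)

/-- `L = (1+T²)^{1/2}`: the nonnegative self-adjoint operator with `L² = 1 + T∘T`. -/
def IsSqrtOnePlusSq (T L : H →ₗ.[ℂ] H) : Prop :=
  IsSelfAdjoint L ∧ (∀ x : L.domain, 0 ≤ (inner ℂ (L x) (x : H) : ℂ).re) ∧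
    pcomp L L = onePlus (pcomp T T)

/-- `U = χ_{[0,∞)}(T) − χ_{(−∞,0)}(T)` for a self-adjoint operator `T`:  a self-adjoint
involution commuting with `T`, equal to the identity on `ker T`, with `U T = |T| ≥ 0`. -/
def IsSignOf (T : H →ₗ.[ℂ] H) (U : H →L[ℂ] H) : Prop :=
  IsSelfAdjoint U ∧ U * U = 1 ∧
    (∀ x (h : x ∈ T.domain), ∃ h2 : U x ∈ T.domain, U (T ⟨x, h⟩) = T ⟨U x, h2⟩) ∧
    (∀ x (h : x ∈ T.domain), 0 ≤ (inner ℂ (x : H) (U (T ⟨x, h⟩)) : ℂ).re) ∧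
    (∀ x (h : x ∈ T.domain), T ⟨x, h⟩ = 0 → U x = x)

/-- `F` is the phase of `D` with `D = F|D|`: `F` intertwines `|D| = M` with `D` and
vanishes on `ker D`. -/
def IsPhaseOf (D M : H →ₗ.[ℂ] H) (F : H →L[ℂ] H) : Prop :=
  (∀ x (h1 : x ∈ M.domain) (h2 : x ∈ D.domain), F (M ⟨x, h1⟩) = D ⟨x, h2⟩) ∧
    (∀ x (h : x ∈ D.domain), D ⟨x, h⟩ = 0 → F x = 0)

/-- `P` is the orthogonal projection onto `ker D`. -/
def IsKerProj (D : H →ₗ.[ℂ] H) (P : H →L[ℂ] H) : Prop :=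
  IsSelfAdjoint P ∧ (∀ ξ : H, ∃ h : P ξ ∈ D.domain, D ⟨P ξ, h⟩ = 0) ∧
    (∀ x (h : x ∈ D.domain), D ⟨x, h⟩ = 0 → P x = x)

/-! ### Commutator extensions and iterated operations -/

/-- `Y` is the bounded extension of the commutator `[L, a]` for a partially defined `L`. -/
def IsCommExt (L : H →ₗ.[ℂ] H) (a Y : H →L[ℂ] H) : Prop :=
  ∀ ξ (h : ξ ∈ L.domain) (h2 : a ξ ∈ L.domain), Y ξ = L ⟨a ξ, h2⟩ - a (L ⟨ξ, h⟩)

/-- `Y` is the bounded extension of `R_L(S) = [L, S] C` (where `L` plays the role of `E²` and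
`C` of `(1+E²)^{-1/2}`). -/
def IsRExt (L : H →ₗ.[ℂ] H) (C S Y : H →L[ℂ] H) : Prop :=
  ∀ ξ (h1 : C ξ ∈ L.domain) (h2 : S (C ξ) ∈ L.domain),
    Y ξ = L ⟨S (C ξ), h2⟩ - S (L ⟨C ξ, h1⟩)

/-- `S` maps `dom_∞(L)` into itself. -/
def MapsDomInfty (L : H →ₗ.[ℂ] H) (S : H →L[ℂ] H) : Prop :=
  ∀ ξ ∈ domInfty L, S ξ ∈ domInfty L

/-- `RChain L C k T S` means `S = R_E^k(T)` where `E² = L` and `C = (1+E²)^{-1/2}`. -/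
inductive RChain (L : H →ₗ.[ℂ] H) (C : H →L[ℂ] H) : ℕ → (H →L[ℂ] H) → (H →L[ℂ] H) → Prop
  | zero (T : H →L[ℂ] H) : RChain L C 0 T T
  | succ (k : ℕ) (T S Y : H →L[ℂ] H) : RChain L C k T S → MapsDomInfty L S →
      IsRExt L C S Y → RChain L C (k + 1) T Y

/-- `T ∈ dom_∞(R_E)` where `E² = L`, `C = (1+E²)^{-1/2}`. -/
def MemDomInftyR (L : H →ₗ.[ℂ] H) (C : H →L[ℂ] H) (T : H →L[ℂ] H) : Prop :=
  MapsDomInfty L T ∧ ∀ k : ℕ, ∃ S, RChain L C k T S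

/-- `DeltaChain L k T S` means `S = δ^k(T)` where `δ = [L, ·]` (with bounded extensions). -/
inductive DeltaChain (L : H →ₗ.[ℂ] H) : ℕ → (H →L[ℂ] H) → (H →L[ℂ] H) → Prop
  | zero (T : H →L[ℂ] H) : DeltaChain L 0 T T
  | succ (k : ℕ) (T S Y : H →L[ℂ] H) : DeltaChain L k T S → IsCommExt L S Y →
      DeltaChain L (k + 1) T Y

/-! ### Pre-spectral triples -/

/-- A pre-spectral triple `(𝒜, H, D)`:  `𝒜` a ∗-subalgebra of `B(H)`, `D` closed, symmetric
and densely defined, such that each `a ∈ 𝒜` maps `dom D*` into `dom D`, the commutator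
`[D*, a]` has bounded extension `∂ a`, and `a (1+D*D)^{-1/2}` is compact. -/
structure PreSpectralTriple (H : Type*) [NormedAddCommGroup H] [InnerProductSpace ℂ H]
    [CompleteSpace H] where
  /-- the ∗-algebra `𝒜` of bounded operators -/
  A : StarSubalgebra ℂ (H →L[ℂ] H)
  /-- the closed symmetric densely defined operator `D` -/
  D : H →ₗ.[ℂ] H
  dense_domain : Dense (D.domain : Set H)
  symmetric : D.IsFormalAdjoint D
  closed : D.IsClosed
  maps_adj_dom : ∀ a ∈ A, ∀ ξ ∈ D.adjoint.domain, a ξ ∈ D.domain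
  /-- `∂ a` : the bounded extension of the commutator `[D*, a]` -/
  der : (H →L[ℂ] H) → (H →L[ℂ] H)
  der_spec : ∀ a ∈ A, ∀ ξ (hξ : ξ ∈ D.adjoint.domain) (h2 : a ξ ∈ D.adjoint.domain),
    der a ξ = D.adjoint ⟨a ξ, h2⟩ - a (D.adjoint ⟨ξ, hξ⟩)
  /-- `(1 + D*D)⁻¹` -/
  RD : H →L[ℂ] H
  RD_spec : IsResolventDstarD D RD
  /-- `(1 + DD*)⁻¹` -/
  RDs : H →L[ℂ] H
  RDs_spec : IsResolventDDstar D RDs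
  compact_res : ∀ a ∈ A, IsCompactOperator ((a : H →L[ℂ] H) * CFC.sqrt RD)

namespace PreSpectralTriple

variable (st : PreSpectralTriple H)

/-- The set `𝒜 ∪ ∂(𝒜)`. -/
def AD : Set (H →L[ℂ] H) := {x | x ∈ st.A ∨ ∃ a ∈ st.A, x = st.der a}

/-- `D*D` as a partially defined operator. -/
def DstarD : H →ₗ.[ℂ] H := pcomp st.D.adjoint st.D

/-- `DD*` as a partially defined operator. -/
def DDstar : H →ₗ.[ℂ] H := pcomp st.D st.D.adjoint

/-- `(𝒜, H, D)` is `p`-dimensional:  `x (1+|D|²)^{-p/2}` and `x (1+|D*|²)^{-p/2}`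
lie in `𝓛_{1,∞}` for all `x ∈ 𝒜 ∪ ∂(𝒜)`. -/
def IsDim (p : ℝ) : Prop :=
  ∀ x ∈ st.AD, MemLpW 1 (x * CFC.rpow st.RD (p / 2)) ∧ MemLpW 1 (x * CFC.rpow st.RDs (p / 2))

/-- `(𝒜, H, D)` is smooth. -/
def Smooth : Prop :=
  ∀ x ∈ st.AD,
    (∀ n : ℕ, ∀ ξ ∈ (ppow st.D.adjoint n).domain, x ξ ∈ (ppow st.D n).domain) ∧
      MemDomInftyR st.DstarD (CFC.sqrt st.RD) x ∧
      MemDomInftyR st.DDstar (CFC.sqrt st.RDs) x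

/-- `(𝒜, H, D)` is smoothly `p`-dimensional. -/
def SmoothlyDim (p : ℝ) : Prop :=
  st.Smooth ∧ st.IsDim p ∧
    ∀ x ∈ st.AD, ∀ k : ℕ,
      (∀ S, RChain st.DstarD (CFC.sqrt st.RD) k x S → MemLpW 1 (S * CFC.rpow st.RD (p / 2))) ∧
      (∀ S, RChain st.DDstar (CFC.sqrt st.RDs) k x S → MemLpW 1 (S * CFC.rpow st.RDs (p / 2)))

/-- Every element of `𝒜` factorises as a product of two elements of `𝒜`. -/
def Factorises : Prop := ∀ a ∈ st.A, ∃ a₁ ∈ st.A, ∃ a₂ ∈ st.A, a = a₁ * a₂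

/-- Hypothesis (C). -/
def HypC (p : ℕ) : Prop :=
  1 ≤ p ∧ st.SmoothlyDim p ∧ st.Factorises ∧
    (1 < p → ∀ a ∈ st.A, 0 ≤ a →
      MemLpW ((p : ℝ) / 4) (a * st.RDs * a - a * st.RD * a)) ∧
    (p = 1 → MemLpW ((1 : ℝ) / 4) (st.RD - st.RDs))

/-- A grading of the pre-spectral triple: a self-adjoint unitary commuting with `𝒜` and
anticommuting with `D`. -/
def IsGrading (γ : H →L[ℂ] H) : Prop :=
  IsSelfAdjoint γ ∧ γ * γ = 1 ∧ (∀ a ∈ st.A, γ * a = a * γ) ∧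
    (∀ ξ (h : ξ ∈ st.D.domain), ∃ h2 : γ ξ ∈ st.D.domain, st.D ⟨γ ξ, h2⟩ = -γ (st.D ⟨ξ, h⟩))

end PreSpectralTriple

/-! ### The clone -/

/-- `H ⊗ ℂ² = H ⊕ H` with the Hilbert space structure. -/
abbrev Dbl (H : Type*) [NormedAddCommGroup H] [InnerProductSpace ℂ H] : Type _ :=
  WithLp 2 (H × H)

/-- The 2×2 operator matrix `[[a,b],[c,d]]` acting on `H ⊕ H`. -/
def blocks (a b c d : H →L[ℂ] H) : Dbl H →L[ℂ] Dbl H :=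
  ((WithLp.prodContinuousLinearEquiv 2 ℂ H H).symm : (H × H) →L[ℂ] Dbl H) ∘L
    (((a ∘L ContinuousLinearMap.fst ℂ H H) + (b ∘L ContinuousLinearMap.snd ℂ H H)).prod
      ((c ∘L ContinuousLinearMap.fst ℂ H H) + (d ∘L ContinuousLinearMap.snd ℂ H H))) ∘L
    ((WithLp.prodContinuousLinearEquiv 2 ℂ H H : Dbl H →L[ℂ] H × H))

/-- The operator `a ⊗ q` on `H ⊗ ℂ²`, where `q = ½ [[1,1],[1,1]]`. -/
def cloneOp (a : H →L[ℂ] H) : Dbl H →L[ℂ] Dbl H :=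
  blocks ((2 : ℂ)⁻¹ • a) ((2 : ℂ)⁻¹ • a) ((2 : ℂ)⁻¹ • a) ((2 : ℂ)⁻¹ • a)

section cloneD
variable (D : H →ₗ.[ℂ] H)

private def fstR : (D.domain.prod D.adjoint.domain) →ₗ[ℂ] D.domain :=
  (LinearMap.fst ℂ H H).restrict fun _ hx => (Submodule.mem_prod.mp hx).1

private def sndR : (D.domain.prod D.adjoint.domain) →ₗ[ℂ] D.adjoint.domain :=
  (LinearMap.snd ℂ H H).restrict fun _ hx => (Submodule.mem_prod.mp hx).2

private def cloneDomain : Submodule ℂ (Dbl H) :=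
  (D.domain.prod D.adjoint.domain).comap (WithLp.linearEquiv 2 ℂ (H × H)).toLinearMap

private def intoProd : cloneDomain D →ₗ[ℂ] (D.domain.prod D.adjoint.domain) :=
  (WithLp.linearEquiv 2 ℂ (H × H)).toLinearMap.restrict fun _ hx => hx

/-- The operator `D₂ = [[0, D*],[D, 0]]` with domain `dom(D) ⊕ dom(D*)`. -/
def cloneD : Dbl H →ₗ.[ℂ] Dbl H where
  domain := cloneDomain D
  toFun :=
    (WithLp.linearEquiv 2 ℂ (H × H)).symm.toLinearMap ∘ₗ
      (LinearMap.prod (D.adjoint.toFun ∘ₗ sndR D) (D.toFun ∘ₗ fstR D)) ∘ₗ intoProd D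

end cloneD

end NCG

section Aux
namespace NCG
set_option linter.unusedSectionVars false
variable {H : Type*} [NormedAddCommGroup H] [InnerProductSpace ℂ H] [CompleteSpace H]

theorem mem_pcomp {S T : H →ₗ.[ℂ] H} {ξ : H} :
    ξ ∈ (pcomp S T).domain ↔ ∃ h : ξ ∈ T.domain, (T ⟨ξ, h⟩ : H) ∈ S.domain := by
  unfold pcomp
  simp only [Submodule.mem_map, Submodule.mem_comap]
  constructor
  · rintro ⟨y, hy, rfl⟩
    exact ⟨y.2, hy⟩
  · rintro ⟨h, h2⟩
    exact ⟨⟨ξ, h⟩, h2, rfl⟩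

theorem pcomp_apply {S T : H →ₗ.[ℂ] H} (x : (pcomp S T).domain) (h : (x : H) ∈ T.domain)
    (h2 : (T ⟨(x : H), h⟩ : H) ∈ S.domain) :
    pcomp S T x = S ⟨(T ⟨(x : H), h⟩ : H), h2⟩ := by
  set e := Submodule.equivMapOfInjective T.domain.subtype (Submodule.injective_subtype _)
    (S.domain.comap T.toFun) with he
  have hx : (((e.symm x : (S.domain.comap T.toFun)) : T.domain) : H) = (x : H) :=
    Submodule.map_equivMapOfInjective_symm_apply T.domain.subtype
      (Submodule.injective_subtype _) _ x
  have hy : ((e.symm x : (S.domain.comap T.toFun)) : T.domain) = (⟨(x : H), h⟩ : T.domain) :=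
    Subtype.ext hx
  show S.toFun ((T.toFun.restrict (fun _ hx => hx)) (e.symm x)) = _
  congr 1
  apply Subtype.ext
  show T.toFun ((e.symm x : (S.domain.comap T.toFun)) : T.domain) = _
  rw [hy]; rfl


theorem mem_ppow_zero {T : H →ₗ.[ℂ] H} (ξ : H) : ξ ∈ (ppow T 0).domain :=
  Submodule.mem_top

theorem ppow_zero_apply {T : H →ₗ.[ℂ] H} (x : (ppow T 0).domain) : ppow T 0 x = (x : H) := rfl

theorem mem_ppow_one {T : H →ₗ.[ℂ] H} {ξ : H} (h : ξ ∈ T.domain) : ξ ∈ (ppow T 1).domain :=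
  mem_pcomp.mpr ⟨Submodule.mem_top, h⟩

theorem ppow_dom_mono {T : H →ₗ.[ℂ] H} {n : ℕ} {ξ : H} (h : ξ ∈ (ppow T (n + 1)).domain) :
    ξ ∈ (ppow T n).domain :=
  (mem_pcomp.mp h).1

theorem ppow_shift {T : H →ₗ.[ℂ] H} : ∀ (n : ℕ) {ξ : H} (hξ : ξ ∈ (ppow T (n + 1)).domain),
    ∃ (h : ξ ∈ T.domain) (h2 : (T ⟨ξ, h⟩ : H) ∈ (ppow T n).domain),
      ppow T (n + 1) ⟨ξ, hξ⟩ = ppow T n ⟨(T ⟨ξ, h⟩ : H), h2⟩ := by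
  intro n
  induction n with
  | zero =>
    intro ξ hξ
    obtain ⟨h0, h1⟩ := mem_pcomp.mp hξ
    refine ⟨h1, Submodule.mem_top, ?_⟩
    exact pcomp_apply ⟨ξ, hξ⟩ h0 h1
  | succ n ih =>
    intro ξ hξ
    obtain ⟨h1, h2⟩ := mem_pcomp.mp hξ
    obtain ⟨h, hT, heq⟩ := ih h1
    have h2' : (ppow T n ⟨(T ⟨ξ, h⟩ : H), hT⟩ : H) ∈ T.domain := heq ▸ h2
    have hTmem : (T ⟨ξ, h⟩ : H) ∈ (ppow T (n + 1)).domain := mem_pcomp.mpr ⟨hT, h2'⟩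
    refine ⟨h, hTmem, ?_⟩
    calc (ppow T (n + 2) ⟨ξ, hξ⟩ : H)
        = T ⟨(ppow T (n + 1) ⟨ξ, h1⟩ : H), h2⟩ := pcomp_apply ⟨ξ, hξ⟩ h1 h2
      _ = T ⟨(ppow T n ⟨(T ⟨ξ, h⟩ : H), hT⟩ : H), h2'⟩ :=
          congrArg (fun z : T.domain => (T z : H)) (Subtype.ext heq)
      _ = ppow T (n + 1) ⟨(T ⟨ξ, h⟩ : H), hTmem⟩ :=
          (pcomp_apply ⟨(T ⟨ξ, h⟩ : H), hTmem⟩ hT h2').symm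

theorem ppow_shift' {T : H →ₗ.[ℂ] H} : ∀ (n : ℕ) {ξ : H} (h : ξ ∈ T.domain)
    (h2 : (T ⟨ξ, h⟩ : H) ∈ (ppow T n).domain),
    ∃ hξ : ξ ∈ (ppow T (n + 1)).domain,
      ppow T (n + 1) ⟨ξ, hξ⟩ = ppow T n ⟨(T ⟨ξ, h⟩ : H), h2⟩ := by
  intro n
  induction n with
  | zero =>
    intro ξ h h2
    exact ⟨mem_ppow_one h, pcomp_apply ⟨ξ, mem_ppow_one h⟩ Submodule.mem_top h⟩
  | succ n ih =>
    intro ξ h h2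
    obtain ⟨h2a, h2b⟩ := mem_pcomp.mp h2
    obtain ⟨hξn, heqn⟩ := ih h h2a
    have hmem : (ppow T (n + 1) ⟨ξ, hξn⟩ : H) ∈ T.domain := by rw [heqn]; exact h2b
    have hξ : ξ ∈ (ppow T (n + 2)).domain := mem_pcomp.mpr ⟨hξn, hmem⟩
    refine ⟨hξ, ?_⟩
    calc (ppow T (n + 2) ⟨ξ, hξ⟩ : H)
        = T ⟨(ppow T (n + 1) ⟨ξ, hξn⟩ : H), hmem⟩ := pcomp_apply ⟨ξ, hξ⟩ hξn hmem
      _ = T ⟨(ppow T n ⟨(T ⟨ξ, h⟩ : H), h2a⟩ : H), h2b⟩ :=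
          congrArg (fun z : T.domain => (T z : H)) (Subtype.ext heqn)
      _ = ppow T (n + 1) ⟨(T ⟨ξ, h⟩ : H), h2⟩ :=
          (pcomp_apply ⟨(T ⟨ξ, h⟩ : H), h2⟩ h2a h2b).symm

theorem mem_domInfty {T : H →ₗ.[ℂ] H} {ξ : H} :
    ξ ∈ domInfty T ↔ ∀ n : ℕ, ξ ∈ (ppow T n).domain := by
  simp [domInfty]

theorem domInfty_sub {T : H →ₗ.[ℂ] H} {ξ η : H} (hξ : ξ ∈ domInfty T) (hη : η ∈ domInfty T) :
    ξ - η ∈ domInfty T := by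
  rw [mem_domInfty] at *
  exact fun n => Submodule.sub_mem _ (hξ n) (hη n)

theorem domInfty_mem_dom {T : H →ₗ.[ℂ] H} {ξ : H} (hξ : ξ ∈ domInfty T) : ξ ∈ T.domain := by
  rw [mem_domInfty] at hξ
  obtain ⟨h0, h1⟩ := mem_pcomp.mp (hξ 1)
  exact h1

theorem domInfty_shift {T : H →ₗ.[ℂ] H} {ξ : H} (hξ : ξ ∈ domInfty T) (h : ξ ∈ T.domain) :
    (T ⟨ξ, h⟩ : H) ∈ domInfty T := by
  rw [mem_domInfty] at *
  intro n
  obtain ⟨h', h2, -⟩ := ppow_shift n (hξ (n + 1))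
  exact h2

theorem oneplus_inj {L : H →ₗ.[ℂ] H}
    (hinner : ∀ (w : H) (h : w ∈ L.domain), 0 ≤ (inner ℂ (w : H) (L ⟨w, h⟩ : H) : ℂ).re)
    {w : H} (h : w ∈ L.domain) (hw0 : w + (L ⟨w, h⟩ : H) = 0) : w = 0 := by
  have h2 := hinner w h
  have h3 : (inner ℂ w (w + (L ⟨w, h⟩ : H)) : ℂ) = 0 := by rw [hw0, inner_zero_right]
  rw [inner_add_right] at h3
  have h4 : ((inner ℂ w w : ℂ)).re + ((inner ℂ w (L ⟨w, h⟩ : H) : ℂ)).re = 0 := by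
    rw [← Complex.add_re, h3, Complex.zero_re]
  have h5 : ((inner ℂ w w : ℂ)).re = ‖w‖ ^ 2 := by
    simpa using inner_self_eq_norm_sq (𝕜 := ℂ) (x := w)
  have h6 : ‖w‖ ^ 2 = 0 := le_antisymm (by linarith) (by positivity)
  have h7 : ‖w‖ = 0 := by
    nlinarith [norm_nonneg w]
  exact norm_eq_zero.mp h7

theorem resolvent_left_inv {L : H →ₗ.[ℂ] H} {R : H →L[ℂ] H}
    (hres : ∀ ξ : H, ∃ h : R ξ ∈ L.domain, R ξ + (L ⟨R ξ, h⟩ : H) = ξ)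
    (hinner : ∀ (w : H) (h : w ∈ L.domain), 0 ≤ (inner ℂ (w : H) (L ⟨w, h⟩ : H) : ℂ).re)
    {w : H} (h : w ∈ L.domain) : R (w + (L ⟨w, h⟩ : H)) = w := by
  obtain ⟨h1, heq⟩ := hres (w + (L ⟨w, h⟩ : H))
  have hu : R (w + (L ⟨w, h⟩ : H)) - w ∈ L.domain := Submodule.sub_mem _ h1 h
  have hL : (L ⟨R (w + (L ⟨w, h⟩ : H)) - w, hu⟩ : H)
      = (L ⟨R (w + (L ⟨w, h⟩ : H)), h1⟩ : H) - (L ⟨w, h⟩ : H) := by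
    rw [show (⟨R (w + (L ⟨w, h⟩ : H)) - w, hu⟩ : L.domain)
      = ⟨R (w + (L ⟨w, h⟩ : H)), h1⟩ - ⟨w, h⟩ from rfl, LinearPMap.map_sub]
  have hz : (R (w + (L ⟨w, h⟩ : H)) - w) + (L ⟨R (w + (L ⟨w, h⟩ : H)) - w, hu⟩ : H) = 0 := by
    rw [hL]
    linear_combination (norm := abel) heq
  have h0 := oneplus_inj hinner hu hz
  linear_combination (norm := abel) h0

theorem dom_ppow_iff_range {L : H →ₗ.[ℂ] H} {R : H →L[ℂ] H}
    (hres : ∀ ξ : H, ∃ h : R ξ ∈ L.domain, R ξ + (L ⟨R ξ, h⟩ : H) = ξ)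
    (hinner : ∀ (w : H) (h : w ∈ L.domain), 0 ≤ (inner ℂ (w : H) (L ⟨w, h⟩ : H) : ℂ).re) :
    ∀ (n : ℕ) (ξ : H), ξ ∈ (ppow L n).domain ↔ ∃ η, ξ = (R ^ n) η := by
  intro n
  induction n with
  | zero =>
    intro ξ
    constructor
    · intro _
      exact ⟨ξ, by rw [pow_zero]; exact (ContinuousLinearMap.one_apply ξ).symm⟩
    · intro _
      exact mem_ppow_zero ξ
  | succ n ih =>
    intro ξ
    constructor
    · intro hξ
      obtain ⟨h, h2, -⟩ := ppow_shift n hξ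
      have hn : ξ ∈ (ppow L n).domain := ppow_dom_mono hξ
      have hν : ξ + (L ⟨ξ, h⟩ : H) ∈ (ppow L n).domain := Submodule.add_mem _ hn h2
      obtain ⟨μ, hμ⟩ := (ih _).mp hν
      refine ⟨μ, ?_⟩
      rw [pow_succ']
      rw [ContinuousLinearMap.mul_apply, ← hμ]
      exact (resolvent_left_inv hres hinner h).symm
    · rintro ⟨η, rfl⟩
      have hζ : (R ^ n) η ∈ (ppow L n).domain := (ih _).mpr ⟨η, rfl⟩
      have hRζ : R ((R ^ n) η) ∈ (ppow L n).domain := by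
        refine (ih _).mpr ⟨R η, ?_⟩
        rw [← ContinuousLinearMap.mul_apply, ← ContinuousLinearMap.mul_apply, ← pow_succ,
          ← pow_succ']
      obtain ⟨hd, heq⟩ := hres ((R ^ n) η)
      have hLmem : (L ⟨R ((R ^ n) η), hd⟩ : H) ∈ (ppow L n).domain := by
        have : (L ⟨R ((R ^ n) η), hd⟩ : H) = (R ^ n) η - R ((R ^ n) η) := by
          linear_combination (norm := abel) heq
        rw [this]
        exact Submodule.sub_mem _ hζ hRζ
      obtain ⟨hξ, -⟩ := ppow_shift' n hd hLmem
      have : (R ^ (n + 1)) η = R ((R ^ n) η) := by rw [pow_succ']; rfl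
      rw [this]
      exact hξ

theorem maps_dom_ppow_of_comm {L : H →ₗ.[ℂ] H} {R C : H →L[ℂ] H}
    (hres : ∀ ξ : H, ∃ h : R ξ ∈ L.domain, R ξ + (L ⟨R ξ, h⟩ : H) = ξ)
    (hinner : ∀ (w : H) (h : w ∈ L.domain), 0 ≤ (inner ℂ (w : H) (L ⟨w, h⟩ : H) : ℂ).re)
    (hC : C * R = R * C) {n : ℕ} {ξ : H} (hξ : ξ ∈ (ppow L n).domain) :
    C ξ ∈ (ppow L n).domain := by
  obtain ⟨η, rfl⟩ := (dom_ppow_iff_range hres hinner n ξ).mp hξ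
  refine (dom_ppow_iff_range hres hinner n _).mpr ⟨C η, ?_⟩
  have hcomm : C * R ^ n = R ^ n * C := ((Commute.pow_right hC n)).eq
  calc C ((R ^ n) η) = (C * R ^ n) η := rfl
    _ = (R ^ n * C) η := by rw [hcomm]
    _ = (R ^ n) (C η) := rfl

theorem ppow_dom_mono' {T : H →ₗ.[ℂ] H} {m n : ℕ} (hmn : m ≤ n) {ξ : H}
    (h : ξ ∈ (ppow T n).domain) : ξ ∈ (ppow T m).domain := by
  induction n with
  | zero => rw [Nat.le_zero.mp hmn]; exact h
  | succ n ih =>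
    rcases Nat.lt_or_ge m (n + 1) with hlt | hge
    · exact ih (Nat.lt_succ_iff.mp hlt) (ppow_dom_mono h)
    · rw [Nat.le_antisymm hmn hge]; exact h

theorem ppow_le {L E : H →ₗ.[ℂ] H}
    (hle : ∀ ξ (h : ξ ∈ L.domain), ∃ (h1 : ξ ∈ E.domain) (h2 : (E ⟨ξ, h1⟩ : H) ∈ E.domain),
      (L ⟨ξ, h⟩ : H) = E ⟨(E ⟨ξ, h1⟩ : H), h2⟩) :
    ∀ (n : ℕ) (ξ : H) (hξ : ξ ∈ (ppow L n).domain),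
      ∃ h2n : ξ ∈ (ppow E (2 * n)).domain,
        (ppow L n ⟨ξ, hξ⟩ : H) = ppow E (2 * n) ⟨ξ, h2n⟩ := by
  intro n
  induction n with
  | zero => intro ξ hξ; exact ⟨Submodule.mem_top, rfl⟩
  | succ n ih =>
    intro ξ hξ
    obtain ⟨h, hL, heq⟩ := ppow_shift n hξ
    obtain ⟨h1, h2, hval⟩ := hle ξ h
    obtain ⟨hE2n, heqn⟩ := ih _ hL
    have hE2n' : (E ⟨(E ⟨ξ, h1⟩ : H), h2⟩ : H) ∈ (ppow E (2 * n)).domain := hval ▸ hE2n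
    obtain ⟨hEξ, heq1⟩ := ppow_shift' (2 * n) h2 hE2n'
    obtain ⟨hξ2, heq2⟩ := ppow_shift' (2 * n + 1) h1 hEξ
    have h21 : 2 * (n + 1) = 2 * n + 1 + 1 := by ring
    have hfin : ξ ∈ (ppow E (2 * (n + 1))).domain := by rw [h21]; exact hξ2
    refine ⟨hfin, ?_⟩
    have e1 : (ppow E (2 * (n + 1)) ⟨ξ, hfin⟩ : H) = ppow E (2 * n + 1 + 1) ⟨ξ, hξ2⟩ := by
      congr 1
    rw [e1, heq2, heq1, heq, heqn]
    exact congrArg (fun z : (ppow E (2 * n)).domain => (ppow E (2 * n) z : H)) (Subtype.ext hval)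

section Triple
variable (st : PreSpectralTriple H)

theorem D_le_adjoint : st.D ≤ st.D.adjoint :=
  st.symmetric.le_adjoint st.dense_domain

theorem mem_adj_of_mem {ξ : H} (h : ξ ∈ st.D.domain) : ξ ∈ st.D.adjoint.domain :=
  (D_le_adjoint st).1 h

theorem adj_eq_D {ξ : H} (h : ξ ∈ st.D.domain) (h' : ξ ∈ st.D.adjoint.domain) :
    (st.D.adjoint ⟨ξ, h'⟩ : H) = st.D ⟨ξ, h⟩ :=
  ((D_le_adjoint st).2 (x := ⟨ξ, h⟩) (y := ⟨ξ, h'⟩) rfl).symm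

theorem hres_DDstar : ∀ ξ : H, ∃ h : st.RDs ξ ∈ st.DDstar.domain,
    st.RDs ξ + (st.DDstar ⟨st.RDs ξ, h⟩ : H) = ξ := by
  intro ξ
  obtain ⟨h1, h2, heq⟩ := st.RDs_spec.2 ξ
  have hm : st.RDs ξ ∈ st.DDstar.domain := mem_pcomp.mpr ⟨h1, h2⟩
  refine ⟨hm, ?_⟩
  rw [show (st.DDstar ⟨st.RDs ξ, hm⟩ : H) = st.D ⟨(st.D.adjoint ⟨st.RDs ξ, h1⟩ : H), h2⟩ from
    pcomp_apply ⟨st.RDs ξ, hm⟩ h1 h2]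
  exact heq

theorem hres_DstarD : ∀ ξ : H, ∃ h : st.RD ξ ∈ st.DstarD.domain,
    st.RD ξ + (st.DstarD ⟨st.RD ξ, h⟩ : H) = ξ := by
  intro ξ
  obtain ⟨h1, h2, heq⟩ := st.RD_spec.2 ξ
  have hm : st.RD ξ ∈ st.DstarD.domain := mem_pcomp.mpr ⟨h1, h2⟩
  refine ⟨hm, ?_⟩
  rw [show (st.DstarD ⟨st.RD ξ, hm⟩ : H) = st.D.adjoint ⟨(st.D ⟨st.RD ξ, h1⟩ : H), h2⟩ from
    pcomp_apply ⟨st.RD ξ, hm⟩ h1 h2]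
  exact heq

theorem hinner_DDstar : ∀ (w : H) (h : w ∈ st.DDstar.domain),
    0 ≤ (inner ℂ w (st.DDstar ⟨w, h⟩ : H) : ℂ).re := by
  intro w h
  obtain ⟨h1, h2⟩ := mem_pcomp.mp h
  rw [show (st.DDstar ⟨w, h⟩ : H) = st.D ⟨(st.D.adjoint ⟨w, h1⟩ : H), h2⟩ from
    pcomp_apply ⟨w, h⟩ h1 h2]
  have hfa := LinearPMap.adjoint_isFormalAdjoint st.dense_domain (T := st.D)
  have key := hfa ⟨w, h1⟩ ⟨(st.D.adjoint ⟨w, h1⟩ : H), h2⟩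
  rw [← key]
  exact inner_self_nonneg (𝕜 := ℂ)

theorem hinner_DstarD : ∀ (w : H) (h : w ∈ st.DstarD.domain),
    0 ≤ (inner ℂ w (st.DstarD ⟨w, h⟩ : H) : ℂ).re := by
  intro w h
  obtain ⟨h1, h2⟩ := mem_pcomp.mp h
  rw [show (st.DstarD ⟨w, h⟩ : H) = st.D.adjoint ⟨(st.D ⟨w, h1⟩ : H), h2⟩ from
    pcomp_apply ⟨w, h⟩ h1 h2]
  have hfa := LinearPMap.adjoint_isFormalAdjoint st.dense_domain (T := st.D)
  have key := hfa ⟨(st.D ⟨w, h1⟩ : H), h2⟩ ⟨w, h1⟩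
  rw [← inner_conj_symm (𝕜 := ℂ), key]
  rw [Complex.conj_re]
  exact inner_self_nonneg (𝕜 := ℂ)

theorem sqrt_comm {R : H →L[ℂ] H} (hR : 0 ≤ R) : CFC.sqrt R * R = R * CFC.sqrt R := by
  calc CFC.sqrt R * R = (CFC.sqrt R * CFC.sqrt R) * CFC.sqrt R := by
        rw [mul_assoc, CFC.sqrt_mul_sqrt_self R hR]
    _ = R * CFC.sqrt R := by rw [CFC.sqrt_mul_sqrt_self R hR]

end Triple

section Triple2
variable (st : PreSpectralTriple H)

theorem hle_DDstar : ∀ ξ (h : ξ ∈ st.DDstar.domain),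
    ∃ (h1 : ξ ∈ st.D.adjoint.domain) (h2 : (st.D.adjoint ⟨ξ, h1⟩ : H) ∈ st.D.adjoint.domain),
      (st.DDstar ⟨ξ, h⟩ : H) = st.D.adjoint ⟨(st.D.adjoint ⟨ξ, h1⟩ : H), h2⟩ := by
  intro ξ h
  obtain ⟨h1, h2⟩ := mem_pcomp.mp h
  refine ⟨h1, mem_adj_of_mem st h2, ?_⟩
  rw [show (st.DDstar ⟨ξ, h⟩ : H) = st.D ⟨(st.D.adjoint ⟨ξ, h1⟩ : H), h2⟩ from
    pcomp_apply ⟨ξ, h⟩ h1 h2]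
  exact (adj_eq_D st h2 (mem_adj_of_mem st h2)).symm

theorem hle_DstarD : ∀ ξ (h : ξ ∈ st.DstarD.domain),
    ∃ (h1 : ξ ∈ st.D.adjoint.domain) (h2 : (st.D.adjoint ⟨ξ, h1⟩ : H) ∈ st.D.adjoint.domain),
      (st.DstarD ⟨ξ, h⟩ : H) = st.D.adjoint ⟨(st.D.adjoint ⟨ξ, h1⟩ : H), h2⟩ := by
  intro ξ h
  obtain ⟨h1, h2⟩ := mem_pcomp.mp h
  have h1' := mem_adj_of_mem st h1
  have hv : (st.D.adjoint ⟨ξ, h1'⟩ : H) = st.D ⟨ξ, h1⟩ := adj_eq_D st h1 h1'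
  have h2' : (st.D.adjoint ⟨ξ, h1'⟩ : H) ∈ st.D.adjoint.domain := by rw [hv]; exact h2
  refine ⟨h1', h2', ?_⟩
  rw [show (st.DstarD ⟨ξ, h⟩ : H) = st.D.adjoint ⟨(st.D ⟨ξ, h1⟩ : H), h2⟩ from
    pcomp_apply ⟨ξ, h⟩ h1 h2]
  exact congrArg (fun z : st.D.adjoint.domain => (st.D.adjoint z : H)) (Subtype.ext hv.symm)

theorem hval2_DDstar : ∀ w (hw : w ∈ st.DDstar.domain) (hw1 : w ∈ st.D.domain)
    (hw2 : (st.D ⟨w, hw1⟩ : H) ∈ st.D.domain),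
    (st.DDstar ⟨w, hw⟩ : H) = st.D ⟨(st.D ⟨w, hw1⟩ : H), hw2⟩ := by
  intro w hw hw1 hw2
  obtain ⟨h1, h2⟩ := mem_pcomp.mp hw
  rw [show (st.DDstar ⟨w, hw⟩ : H) = st.D ⟨(st.D.adjoint ⟨w, h1⟩ : H), h2⟩ from
    pcomp_apply ⟨w, hw⟩ h1 h2]
  exact congrArg (fun z : st.D.domain => (st.D z : H)) (Subtype.ext (adj_eq_D st hw1 h1))

theorem hval2_DstarD : ∀ w (hw : w ∈ st.DstarD.domain) (hw1 : w ∈ st.D.domain)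
    (hw2 : (st.D ⟨w, hw1⟩ : H) ∈ st.D.domain),
    (st.DstarD ⟨w, hw⟩ : H) = st.D ⟨(st.D ⟨w, hw1⟩ : H), hw2⟩ := by
  intro w hw hw1 hw2
  obtain ⟨h1, h2⟩ := mem_pcomp.mp hw
  rw [show (st.DstarD ⟨w, hw⟩ : H) = st.D.adjoint ⟨(st.D ⟨w, h1⟩ : H), h2⟩ from
    pcomp_apply ⟨w, hw⟩ h1 h2]
  exact adj_eq_D st hw2 h2

theorem chain_maps {L : H →ₗ.[ℂ] H} {R C x : H →L[ℂ] H}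
    (hres : ∀ ξ : H, ∃ h : R ξ ∈ L.domain, R ξ + (L ⟨R ξ, h⟩ : H) = ξ)
    (hinner : ∀ (w : H) (h : w ∈ L.domain), 0 ≤ (inner ℂ w (L ⟨w, h⟩ : H) : ℂ).re)
    (hC : C * R = R * C)
    (hval2 : ∀ w (hw : w ∈ L.domain) (hw1 : w ∈ st.D.domain)
      (hw2 : (st.D ⟨w, hw1⟩ : H) ∈ st.D.domain),
      (L ⟨w, hw⟩ : H) = st.D ⟨(st.D ⟨w, hw1⟩ : H), hw2⟩)
    (hbase : ∀ ξ ∈ domInfty L, x ξ ∈ domInfty st.D) :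
    ∀ (k : ℕ) (S : H →L[ℂ] H), RChain L C k x S →
      ∀ ξ ∈ domInfty L, S ξ ∈ domInfty st.D := by
  intro k
  induction k with
  | zero =>
    intro S hS ξ hξ
    cases hS
    exact hbase ξ hξ
  | succ k ih =>
    intro Y hY ξ hξ
    rcases hY with _ | ⟨k', T', S, Y', hchain, hmaps, hext⟩
    have hCξ : C ξ ∈ domInfty L := by
      rw [mem_domInfty] at hξ ⊢
      intro n
      exact maps_dom_ppow_of_comm hres hinner hC (hξ n)
    have h1 : C ξ ∈ L.domain := domInfty_mem_dom hCξ
    have hSCξL : S (C ξ) ∈ domInfty L := hmaps _ hCξ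
    have hSCξD : S (C ξ) ∈ domInfty st.D := ih S hchain _ hCξ
    have h2 : S (C ξ) ∈ L.domain := domInfty_mem_dom hSCξL
    rw [hext ξ h1 h2]
    have t1 : (L ⟨S (C ξ), h2⟩ : H) ∈ domInfty st.D := by
      have hw1 : S (C ξ) ∈ st.D.domain := domInfty_mem_dom hSCξD
      have hDw : (st.D ⟨S (C ξ), hw1⟩ : H) ∈ domInfty st.D := domInfty_shift hSCξD hw1
      have hw2 : (st.D ⟨S (C ξ), hw1⟩ : H) ∈ st.D.domain := domInfty_mem_dom hDw
      rw [hval2 _ h2 hw1 hw2]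
      exact domInfty_shift hDw hw2
    have t2 : S ((L ⟨C ξ, h1⟩ : H)) ∈ domInfty st.D := by
      have hLC : (L ⟨C ξ, h1⟩ : H) ∈ domInfty L := domInfty_shift hCξ h1
      exact ih S hchain _ hLC
    exact domInfty_sub t1 t2

end Triple2

end NCG
end Aux

open NCG in
/-- Let `(𝒜, H, D)` be a smooth pre-spectral triple.  Then for all
`x ∈ 𝒜 ∪ ∂(𝒜)` and all `k ≥ 0`, the operator `R^k_{|D*|}(x)` maps `dom_∞(|D*|)` into
`dom_∞(D)`, and `R^k_{|D|}(x)` maps `dom_∞(|D|)` into `dom_∞(D)`. -/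
theorem stmt4 {H : Type*} [NormedAddCommGroup H] [InnerProductSpace ℂ H] [CompleteSpace H]
    [TopologicalSpace.SeparableSpace H] (st : PreSpectralTriple H) (hsm : st.Smooth) :
    ∀ x ∈ st.AD, ∀ k : ℕ,
      (∀ S, RChain st.DDstar (CFC.sqrt st.RDs) k x S →
        ∀ ξ ∈ domInfty st.DDstar, S ξ ∈ domInfty st.D) ∧
      (∀ S, RChain st.DstarD (CFC.sqrt st.RD) k x S →
        ∀ ξ ∈ domInfty st.DstarD, S ξ ∈ domInfty st.D) := by
  intro x hx k
  obtain ⟨hmapsn, -, -⟩ := hsm x hx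
  have hbase1 : ∀ ξ ∈ domInfty st.DDstar, x ξ ∈ domInfty st.D := by
    intro ξ hξ
    rw [mem_domInfty] at hξ ⊢
    intro n
    obtain ⟨h2n, -⟩ := ppow_le (hle_DDstar st) n ξ (hξ n)
    exact hmapsn n ξ (ppow_dom_mono' (by omega) h2n)
  have hbase2 : ∀ ξ ∈ domInfty st.DstarD, x ξ ∈ domInfty st.D := by
    intro ξ hξ
    rw [mem_domInfty] at hξ ⊢
    intro n
    obtain ⟨h2n, -⟩ := ppow_le (hle_DstarD st) n ξ (hξ n)
    exact hmapsn n ξ (ppow_dom_mono' (by omega) h2n)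
  exact ⟨fun S hS => chain_maps st (hres_DDstar st) (hinner_DDstar st)
      (sqrt_comm st.RDs_spec.1) (hval2_DDstar st) hbase1 k S hS,
    fun S hS => chain_maps st (hres_DstarD st) (hinner_DstarD st)
      (sqrt_comm st.RD_spec.1) (hval2_DstarD st) hbase2 k S hS⟩
end
end

section
/- If (𝒜, H, D) is a smoothly p-dimensional pre-spectral triple with p ≥ 1, then for all k ≥ 0 and all x ∈ 𝒜 ∪ ∂(𝒜) one has R^k_{|D*|}(x)(1+|D*|²)^{-1/2} ∈ 𝓛_{p,∞} and R^k_{|D|}(x)(1+|D|²)^{-1/2} ∈ 𝓛_{p,∞}. -/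
set_option synthInstance.maxHeartbeats 400000
set_option maxHeartbeats 1000000

noncomputable section

namespace Stmt7Aux
open NNReal


def gfun (p : ℝ) (t : ℝ≥0) : ℝ≥0 → ℝ≥0 :=
  fun r => NNReal.sqrt r * (max (NNReal.sqrt r) t) ^ (-p)

def hfun (p : ℝ) (t : ℝ≥0) : ℝ≥0 → ℝ≥0 :=
  fun r => NNReal.sqrt r - r ^ (p / 2 : ℝ) * gfun p t r

lemma gfun_continuous (p : ℝ) {t : ℝ≥0} (ht : 0 < t) : Continuous (gfun p t) := by
  rw [continuous_iff_continuousAt]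
  intro x
  apply ContinuousAt.mul
  · exact NNReal.continuous_sqrt.continuousAt
  · have hbase : Continuous fun r : ℝ≥0 => max (NNReal.sqrt r) t :=
      NNReal.continuous_sqrt.max continuous_const
    exact Filter.Tendsto.nnrpow hbase.continuousAt tendsto_const_nhds
      (.inl (lt_of_lt_of_le ht (le_max_right _ _)).ne')

lemma hfun_continuous (p : ℝ) (hp : 1 ≤ p) {t : ℝ≥0} (ht : 0 < t) : Continuous (hfun p t) := by
  apply Continuous.sub NNReal.continuous_sqrt
  exact (NNReal.continuous_rpow_const (by linarith)).mul (gfun_continuous p ht)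

lemma gfun_le (p : ℝ) {t : ℝ≥0} (ht : 0 < t) (hp : 1 ≤ p) (r : ℝ≥0) :
    gfun p t r ≤ t ^ ((1 : ℝ) - p) := by
  set u := NNReal.sqrt r
  set m := max u t with hm
  have hm0 : m ≠ 0 := (lt_of_lt_of_le ht (le_max_right _ _)).ne'
  have h1 : gfun p t r ≤ m * m ^ (-p) :=
    mul_le_mul_left (le_max_left _ _) _
  have h2 : m * m ^ (-p) = m ^ ((1:ℝ) - p) := by
    rw [sub_eq_add_neg, NNReal.rpow_add hm0, NNReal.rpow_one]
  refine h1.trans (h2.le.trans ?_)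
  exact NNReal.rpow_le_rpow_of_nonpos ht (le_max_right _ _) (by linarith)

lemma pow_half_eq (p : ℝ) (r : ℝ≥0) : r ^ (p / 2 : ℝ) = NNReal.sqrt r ^ (p : ℝ) := by
  have : r = NNReal.sqrt r ^ (2 : ℝ) := by
    rw [show ((2:ℝ)) = ((2:ℕ):ℝ) by norm_num, NNReal.rpow_natCast, NNReal.sq_sqrt]
  conv_lhs => rw [this, ← NNReal.rpow_mul]
  congr 1
  ring

lemma main_le (p : ℝ) (hp : 1 ≤ p) (t : ℝ≥0) (ht : 0 < t) (r : ℝ≥0) :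
    r ^ (p / 2 : ℝ) * gfun p t r ≤ NNReal.sqrt r := by
  set u := NNReal.sqrt r
  set m := max u t with hm
  have hm0 : m ≠ 0 := (lt_of_lt_of_le ht (le_max_right _ _)).ne'
  rw [pow_half_eq]
  show u ^ (p:ℝ) * (u * m ^ (-p)) ≤ u
  calc u ^ (p:ℝ) * (u * m ^ (-p)) = u * (u ^ (p:ℝ) * m ^ (-p)) := by ring
    _ ≤ u * (m ^ (p:ℝ) * m ^ (-p)) := by
        exact mul_le_mul_right
          (mul_le_mul_left (NNReal.rpow_le_rpow (le_max_left _ _) (by linarith)) _) _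
    _ = u := by rw [← NNReal.rpow_add hm0]; simp

lemma hfun_le (p : ℝ) (hp : 1 ≤ p) (t : ℝ≥0) (ht : 0 < t) (r : ℝ≥0) :
    hfun p t r ≤ t := by
  unfold hfun
  set u := NNReal.sqrt r with hu
  rcases le_total u t with h | h
  · exact (tsub_le_self).trans h
  · have hu0 : u ≠ 0 := (lt_of_lt_of_le ht h).ne'
    have hm : max u t = u := max_eq_left h
    have : r ^ (p / 2 : ℝ) * gfun p t r = u := by
      rw [pow_half_eq]
      show u ^ (p:ℝ) * (u * (max u t) ^ (-p)) = u
      rw [hm]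
      calc u ^ (p:ℝ) * (u * u ^ (-p)) = u * (u ^ (p:ℝ) * u ^ (-p)) := by ring
        _ = u := by rw [← NNReal.rpow_add hu0]; simp
    rw [hu] at this ⊢
    rw [this]
    simp

lemma sqrt_decomp (p : ℝ) (hp : 1 ≤ p) (t : ℝ≥0) (ht : 0 < t) (r : ℝ≥0) :
    NNReal.sqrt r = r ^ (p / 2 : ℝ) * gfun p t r + hfun p t r :=
  (add_tsub_cancel_of_le (main_le p hp t ht r)).symm

section Op

variable {H : Type*} [NormedAddCommGroup H] [InnerProductSpace ℂ H] [CompleteSpace H]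

lemma op_decomp (p : ℝ) (hp : 1 ≤ p) (t : ℝ≥0) (ht : 0 < t) (a : H →L[ℂ] H) (ha : 0 ≤ a) :
    CFC.sqrt a = CFC.rpow a (p / 2) * cfc (gfun p t) a + cfc (hfun p t) a := by
  have hg : ContinuousOn (gfun p t) (spectrum ℝ≥0 a) := (gfun_continuous p ht).continuousOn
  have hh : ContinuousOn (hfun p t) (spectrum ℝ≥0 a) := (hfun_continuous p hp ht).continuousOn
  have hr : ContinuousOn (fun x : ℝ≥0 => x ^ (p / 2 : ℝ)) (spectrum ℝ≥0 a) :=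
    (NNReal.continuous_rpow_const (by linarith)).continuousOn
  have h1 : CFC.rpow a (p / 2) = cfc (fun x : ℝ≥0 => x ^ (p / 2 : ℝ)) a := rfl
  rw [CFC.sqrt_eq_cfc, h1, ← cfc_mul _ _ a hr hg, ← cfc_add a (fun x : ℝ≥0 => x ^ (p / 2 : ℝ) * gfun p t x) _ (hr.mul hg) hh]
  exact cfc_congr fun r _ => sqrt_decomp p hp t ht r

lemma norm_cfc_gfun_le (p : ℝ) (hp : 1 ≤ p) {t : ℝ≥0} (ht : 0 < t) (a : H →L[ℂ] H)
    (ha : 0 ≤ a) : ‖cfc (gfun p t) a‖ ≤ ((t : ℝ) ^ ((1:ℝ) - p)) := by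
  have : ‖cfc (gfun p t) a‖₊ ≤ t ^ ((1:ℝ) - p) :=
    nnnorm_cfc_nnreal_le fun x _ => gfun_le p ht hp x
  calc ‖cfc (gfun p t) a‖ = ((‖cfc (gfun p t) a‖₊ : ℝ≥0) : ℝ) := rfl
    _ ≤ ((t ^ ((1:ℝ) - p) : ℝ≥0) : ℝ) := by exact_mod_cast this
    _ = (t : ℝ) ^ ((1:ℝ) - p) := NNReal.coe_rpow t _

lemma norm_cfc_hfun_le (p : ℝ) (hp : 1 ≤ p) {t : ℝ≥0} (ht : 0 < t) (a : H →L[ℂ] H)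
    (ha : 0 ≤ a) : ‖cfc (hfun p t) a‖ ≤ (t : ℝ) := by
  have : ‖cfc (hfun p t) a‖₊ ≤ t :=
    nnnorm_cfc_nnreal_le fun x _ => hfun_le p hp t ht x
  exact_mod_cast this

end Op

end Stmt7Aux


section KeyAux
open NNReal NCG

namespace Stmt7Aux

variable {H : Type*} [NormedAddCommGroup H] [InnerProductSpace ℂ H] [CompleteSpace H]

lemma sval_set_nonempty (T : H →L[ℂ] H) (n : ℕ) :
    {c : ℝ | ∃ R : H →L[ℂ] H,
      Module.rank ℂ (LinearMap.range (R : H →ₗ[ℂ] H)) ≤ (n : Cardinal) ∧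
        ‖T - R‖ = c}.Nonempty := by
  refine ⟨‖T - 0‖, 0, ?_, rfl⟩
  simp

lemma sval_set_bddBelow (T : H →L[ℂ] H) (n : ℕ) :
    BddBelow {c : ℝ | ∃ R : H →L[ℂ] H,
      Module.rank ℂ (LinearMap.range (R : H →ₗ[ℂ] H)) ≤ (n : Cardinal) ∧ ‖T - R‖ = c} := by
  refine ⟨0, ?_⟩
  rintro c ⟨R, -, rfl⟩
  exact norm_nonneg _

lemma sval_nonneg (T : H →L[ℂ] H) (n : ℕ) : 0 ≤ NCG.sval T n := by
  apply Real.sInf_nonneg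
  rintro c ⟨R, -, rfl⟩
  exact norm_nonneg _

lemma sval_le (T R : H →L[ℂ] H) (n : ℕ)
    (h : Module.rank ℂ (LinearMap.range (R : H →ₗ[ℂ] H)) ≤ (n : Cardinal)) :
    NCG.sval T n ≤ ‖T - R‖ :=
  csInf_le (sval_set_bddBelow T n) ⟨R, h, rfl⟩

lemma key (S a : H →L[ℂ] H) (ha : 0 ≤ a) (p : ℝ) (hp : 1 ≤ p)
    (h : MemLpW 1 (S * CFC.rpow a (p / 2))) : MemLpW p (S * CFC.sqrt a) := by
  obtain ⟨hcpt, C, hC⟩ := h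
  set T' := S * CFC.rpow a (p / 2) with hT'
  have hp0 : (0:ℝ) < p := by linarith
  have est : ∀ (n : ℕ) (t : ℝ≥0), 0 < t → ∀ ε : ℝ, 0 < ε →
      sval (S * CFC.sqrt a) n ≤ (sval T' n + ε) * (t:ℝ) ^ ((1:ℝ) - p) + ‖S‖ * t := by
    intro n t ht ε hε
    obtain ⟨c, hc, hclt⟩ := Real.lt_sInf_add_pos (sval_set_nonempty T' n) hε
    obtain ⟨R, hrank, hnorm⟩ := hc
    set G := cfc (gfun p t) a with hG
    set Hh := cfc (hfun p t) a with hH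
    have hdec : S * CFC.sqrt a - R * G = (T' - R) * G + S * Hh := by
      rw [hT', op_decomp p hp t ht a ha]
      noncomm_ring
    have hnorm2 : ‖S * CFC.sqrt a - R * G‖ ≤
        (sval T' n + ε) * (t:ℝ) ^ ((1:ℝ) - p) + ‖S‖ * t := by
      rw [hdec]
      refine (norm_add_le _ _).trans (add_le_add ?_ ?_)
      · refine (norm_mul_le _ _).trans ?_
        refine mul_le_mul ?_ (norm_cfc_gfun_le p hp ht a ha) (norm_nonneg _) ?_
        · rw [hnorm]; exact hclt.le
        · have := sval_nonneg T' n; linarith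
      · exact (norm_mul_le _ _).trans
          (mul_le_mul_of_nonneg_left (norm_cfc_hfun_le p hp ht a ha) (norm_nonneg S))
    refine le_trans ?_ hnorm2
    apply sval_le
    have hle : LinearMap.range ((R * G : H →L[ℂ] H) : H →ₗ[ℂ] H) ≤
        LinearMap.range (R : H →ₗ[ℂ] H) := by
      rw [ContinuousLinearMap.mul_def]
      exact LinearMap.range_comp_le_range (G : H →ₗ[ℂ] H) (R : H →ₗ[ℂ] H)
    exact (Submodule.rank_mono hle).trans hrank
  constructor
  · have htend : Filter.Tendsto (fun k : ℕ => T' * cfc (gfun p ((k:ℝ≥0)+1)⁻¹) a)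
        Filter.atTop (nhds (S * CFC.sqrt a)) := by
      rw [tendsto_iff_norm_sub_tendsto_zero]
      have hb : ∀ k : ℕ, ‖T' * cfc (gfun p ((k:ℝ≥0)+1)⁻¹) a - (S * CFC.sqrt a)‖ ≤
          ‖S‖ * ((k:ℝ)+1)⁻¹ := by
        intro k
        have htk : (0:ℝ≥0) < ((k:ℝ≥0)+1)⁻¹ := by positivity
        have hdec : S * CFC.sqrt a - T' * cfc (gfun p ((k:ℝ≥0)+1)⁻¹) a =
            S * cfc (hfun p ((k:ℝ≥0)+1)⁻¹) a := by
          rw [hT', op_decomp p hp _ htk a ha]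
          noncomm_ring
        rw [norm_sub_rev, hdec]
        refine (norm_mul_le _ _).trans ?_
        have h2 := norm_cfc_hfun_le p hp htk a ha
        calc ‖S‖ * ‖cfc (hfun p ((k:ℝ≥0)+1)⁻¹) a‖ ≤
            ‖S‖ * (((((k:ℝ≥0)+1)⁻¹ : ℝ≥0)) : ℝ) :=
              mul_le_mul_of_nonneg_left h2 (norm_nonneg S)
          _ = ‖S‖ * ((k:ℝ)+1)⁻¹ := by push_cast; ring
      have hlim : Filter.Tendsto (fun k : ℕ => ‖S‖ * ((k:ℝ)+1)⁻¹) Filter.atTop (nhds 0) := by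
        have := tendsto_one_div_add_atTop_nhds_zero_nat.const_mul ‖S‖
        simpa [one_div] using this
      exact squeeze_zero (fun k => norm_nonneg _) hb hlim
    refine isCompactOperator_of_tendsto htend (Filter.Eventually.of_forall fun k => ?_)
    rw [ContinuousLinearMap.mul_def, ContinuousLinearMap.coe_comp]
    exact hcpt.comp_clm _
  · refine ⟨C + 1 + ‖S‖, fun n => ?_⟩
    set N : ℝ := (n:ℝ) + 1 with hN
    have hN0 : (0:ℝ) < N := by positivity
    set t : ℝ≥0 := ((n : ℝ≥0) + 1) ^ (-(1/p) : ℝ) with htdef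
    have ht : 0 < t := NNReal.rpow_pos (by positivity)
    have htr : (t:ℝ) = N ^ (-(1/p) : ℝ) := by
      rw [htdef, NNReal.coe_rpow]
      push_cast
      rfl
    have hest := est n t ht N⁻¹ (by positivity)
    have hT'bound : sval T' n + N⁻¹ ≤ (C + 1) * N ^ (-(1:ℝ)) := by
      have h1 := hC n
      have h2 : ((n:ℝ) + 1) ^ (-(1/(1:ℝ))) = N ^ (-(1:ℝ)) := by rw [hN]; norm_num
      rw [h2] at h1
      have h3 : N⁻¹ = N ^ (-(1:ℝ)) := (Real.rpow_neg_one N).symm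
      rw [h3]
      nlinarith [Real.rpow_pos_of_pos hN0 (-(1:ℝ))]
    have hgr : (t:ℝ) ^ ((1:ℝ) - p) = N ^ ((-(1/p)) * ((1:ℝ) - p)) := by
      rw [htr, ← Real.rpow_mul hN0.le]
    have hrnn : (0:ℝ) ≤ (t:ℝ) ^ ((1:ℝ) - p) := Real.rpow_nonneg (NNReal.coe_nonneg t) _
    have step1 : (sval T' n + N⁻¹) * (t:ℝ) ^ ((1:ℝ) - p) ≤
        ((C + 1) * N ^ (-(1:ℝ))) * N ^ ((-(1/p)) * ((1:ℝ) - p)) := by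
      rw [hgr]
      exact mul_le_mul_of_nonneg_right hT'bound (hgr ▸ hrnn)
    have hexp : N ^ (-(1:ℝ)) * N ^ ((-(1/p)) * ((1:ℝ) - p)) = N ^ (-(1/p)) := by
      rw [← Real.rpow_add hN0]
      congr 1
      field_simp
      ring
    have step2 : ((C + 1) * N ^ (-(1:ℝ))) * N ^ ((-(1/p)) * ((1:ℝ) - p)) =
        (C + 1) * N ^ (-(1/p)) := by
      rw [mul_assoc, hexp]
    have final : sval (S * CFC.sqrt a) n ≤ (C + 1) * N ^ (-(1/p)) + ‖S‖ * N ^ (-(1/p)) := by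
      refine hest.trans ?_
      refine add_le_add (step1.trans step2.le) ?_
      rw [htr]
    calc sval (S * CFC.sqrt a) n ≤ (C + 1) * N ^ (-(1/p)) + ‖S‖ * N ^ (-(1/p)) := final
      _ = (C + 1 + ‖S‖) * N ^ (-(1/p)) := by ring
      _ = (C + 1 + ‖S‖) * ((n:ℝ) + 1) ^ (-(1/p)) := by rw [hN]

end Stmt7Aux
end KeyAux

open NCG in
/-- If `(𝒜, H, D)` is a smoothly `p`-dimensional pre-spectral triple with
`p ≥ 1`, then for all `k ≥ 0` and `x ∈ 𝒜 ∪ ∂(𝒜)`,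
`R^k_{|D*|}(x)(1+|D*|²)^{-1/2} ∈ 𝓛_{p,∞}` and `R^k_{|D|}(x)(1+|D|²)^{-1/2} ∈ 𝓛_{p,∞}`. -/
theorem stmt7 {H : Type*} [NormedAddCommGroup H] [InnerProductSpace ℂ H] [CompleteSpace H]
    [TopologicalSpace.SeparableSpace H] (st : PreSpectralTriple H)
    (p : ℝ) (hp : 1 ≤ p) (hsd : st.SmoothlyDim p) :
    ∀ x ∈ st.AD, ∀ k : ℕ,
      (∀ S, RChain st.DDstar (CFC.sqrt st.RDs) k x S → MemLpW p (S * CFC.sqrt st.RDs)) ∧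
      (∀ S, RChain st.DstarD (CFC.sqrt st.RD) k x S → MemLpW p (S * CFC.sqrt st.RD)) := by
  
  intro x hx k
  obtain ⟨h1, h2⟩ := hsd.2.2 x hx k
  exact ⟨fun S hS => Stmt7Aux.key S st.RDs st.RDs_spec.1 p hp (h2 S hS),
         fun S hS => Stmt7Aux.key S st.RD st.RD_spec.1 p hp (h1 S hS)⟩
end
end
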